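/- For every bounded measurable function f on [0,∞), M̄₁(f) ≤ R̄(f), where M̄₁(f) = lim_{θ→∞} limsup_{x→∞} (1/θ) ∫ₓ^{x+θ} f(t) dt and R̄(f) = limsup_{x→∞} e^{-x} ∫₀ˣ f(t)eᵗ dt. -/

import Mathlib

open Filter MeasureTheory Set

noncomputable def Sop (f : ℝ → ℝ) (x : ℝ) : ℝ :=
  Real.exp (-x) * ∫ t in (0:ℝ)..x, f t * Real.exp t

noncomputable def M1 (f : ℝ → ℝ) : ℝ :=
  limsup (fun θ : ℝ =>
    limsup (fun x : ℝ => (1/θ) * ∫ t in x..(x+θ), f t) atTop) atTop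

section aux

variable {f : ℝ → ℝ} {C : ℝ}

lemma myInt (hf : Measurable f) (hbd : ∀ x, |f x| ≤ C) (a b : ℝ) :
    IntervalIntegrable f volume a b := by
  rw [intervalIntegrable_iff]
  refine Integrable.mono' (g := fun _ => C) ?_ hf.aestronglyMeasurable ?_
  · exact integrableOn_const measure_Ioc_lt_top.ne
  · exact Eventually.of_forall fun x => by simpa [Real.norm_eq_abs] using hbd x

lemma myIntExp (hf : Measurable f) (hbd : ∀ x, |f x| ≤ C) (a b : ℝ) :
    IntervalIntegrable (fun t => f t * Real.exp t) volume a b :=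
  (myInt hf hbd a b).mul_continuousOn Real.continuous_exp.continuousOn

lemma SopCont (hf : Measurable f) (hbd : ∀ x, |f x| ≤ C) : Continuous (Sop f) :=
  ((Real.continuous_exp.comp continuous_neg)).mul
    (intervalIntegral.continuous_primitive (fun a b => myIntExp hf hbd a b) 0)

lemma expint (a c : ℝ) : ∫ t in a..c, Real.exp (-t) = Real.exp (-a) - Real.exp (-c) := by
  rw [intervalIntegral.integral_comp_neg (fun t => Real.exp t), integral_exp]

lemma SopBound (hf : Measurable f) (hbd : ∀ x, |f x| ≤ C) :
    ∀ x : ℝ, 0 ≤ x → |Sop f x| ≤ C := by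
  have hC : 0 ≤ C := le_trans (abs_nonneg _) (hbd 0)
  intro x hx
  have h1 : |∫ t in (0:ℝ)..x, f t * Real.exp t| ≤ ∫ t in (0:ℝ)..x, C * Real.exp t := by
    calc |∫ t in (0:ℝ)..x, f t * Real.exp t|
        ≤ ∫ t in (0:ℝ)..x, |f t| * Real.exp t := by
          simpa [Real.norm_eq_abs, abs_mul, abs_of_pos (Real.exp_pos _)] using
            intervalIntegral.norm_integral_le_integral_norm
              (f := fun t => f t * Real.exp t) (μ := volume) hx
      _ ≤ ∫ t in (0:ℝ)..x, C * Real.exp t := by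
          apply intervalIntegral.integral_mono_on hx
          · have := (myInt hf hbd 0 x).norm.mul_continuousOn
              Real.continuous_exp.continuousOn
            simpa [Real.norm_eq_abs] using this
          · exact (continuous_const.mul Real.continuous_exp).intervalIntegrable _ _
          · intro t _
            exact mul_le_mul_of_nonneg_right (hbd t) (Real.exp_pos t).le
  have h2 : ∫ t in (0:ℝ)..x, C * Real.exp t = C * (Real.exp x - 1) := by
    rw [intervalIntegral.integral_const_mul, integral_exp, Real.exp_zero]
  have h3 : Real.exp (-x) * Real.exp x = 1 := by rw [← Real.exp_add]; simp
  have h4 : |Sop f x| = Real.exp (-x) * |∫ t in (0:ℝ)..x, f t * Real.exp t| := by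
    rw [Sop, abs_mul, abs_of_pos (Real.exp_pos _)]
  rw [h4]
  have h5 := mul_le_mul_of_nonneg_left (h1.trans h2.le) (Real.exp_pos (-x)).le
  nlinarith [Real.exp_pos (-x), abs_nonneg (∫ t in (0:ℝ)..x, f t * Real.exp t)]

lemma fubini_tri (hf : Measurable f) (hbd : ∀ x, |f x| ≤ C) {x b : ℝ} (hxb : x ≤ b) :
    (∫ t in x..b, Real.exp (-t) * ∫ s in x..t, f s * Real.exp s)
      = ∫ s in x..b, (f s * Real.exp s) * (Real.exp (-s) - Real.exp (-b)) := by
  have hC : 0 ≤ C := le_trans (abs_nonneg _) (hbd 0)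
  set ν := volume.restrict (Ioc x b) with hν
  haveI : IsFiniteMeasure ν := ⟨by simpa [hν, Measure.restrict_apply_univ] using measure_Ioc_lt_top⟩
  set H : ℝ × ℝ → ℝ := fun p => if p.2 ≤ p.1 then Real.exp (-p.1) * (f p.2 * Real.exp p.2) else 0
    with hH
  have hHmeas : Measurable H := by
    apply Measurable.ite (measurableSet_le measurable_snd measurable_fst)
    · exact (measurable_fst.neg.exp).mul ((hf.comp measurable_snd).mul measurable_snd.exp)
    · exact measurable_const
  have hint : Integrable H (ν.prod ν) := by
    refine Integrable.mono' (g := fun _ => Real.exp (-x) * (C * Real.exp b))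
      (integrable_const _) hHmeas.aestronglyMeasurable ?_
    rw [hν, Measure.prod_restrict]
    rw [ae_restrict_iff' (measurableSet_Ioc.prod measurableSet_Ioc)]
    refine Eventually.of_forall fun p hp => ?_
    rcases hp with ⟨hp1, hp2⟩
    show |if p.2 ≤ p.1 then Real.exp (-p.1) * (f p.2 * Real.exp p.2) else 0|
      ≤ Real.exp (-x) * (C * Real.exp b)
    by_cases h : p.2 ≤ p.1
    · rw [if_pos h, abs_mul, abs_mul, abs_of_pos (Real.exp_pos _), abs_of_pos (Real.exp_pos _)]
      have e1 : Real.exp (-p.1) ≤ Real.exp (-x) := Real.exp_le_exp.2 (by linarith [hp1.1])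
      have e2 : Real.exp p.2 ≤ Real.exp b := Real.exp_le_exp.2 hp2.2
      have h3 := hbd p.2
      have inner : |f p.2| * Real.exp p.2 ≤ C * Real.exp b :=
        mul_le_mul h3 e2 (Real.exp_pos _).le hC
      exact mul_le_mul e1 inner (by positivity) (Real.exp_pos _).le
    · rw [if_neg h, abs_zero]
      positivity
  have inner1 : ∀ t ∈ Ioc x b,
      (∫ s, H (t, s) ∂ν) = Real.exp (-t) * ∫ s in x..t, f s * Real.exp s := by
    intro t ht
    have h1 : (fun s => H (t, s))
        = (Iic t).indicator (fun s => Real.exp (-t) * (f s * Real.exp s)) := by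
      funext s; simp [hH, Set.indicator_apply, Set.mem_Iic]
    rw [hν, h1, setIntegral_indicator measurableSet_Iic, Ioc_inter_Iic,
      min_eq_right ht.2, ← intervalIntegral.integral_of_le ht.1.le,
      intervalIntegral.integral_const_mul]
  have inner2 : ∀ s ∈ Ioc x b,
      (∫ t, H (t, s) ∂ν) = (f s * Real.exp s) * (Real.exp (-s) - Real.exp (-b)) := by
    intro s hs
    have h1 : (fun t => H (t, s))
        = (Ici s).indicator (fun t => (f s * Real.exp s) * Real.exp (-t)) := by
      funext t
      simp only [hH, Set.indicator_apply, Set.mem_Ici]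
      split_ifs with h <;> ring
    have h2 : Ioc x b ∩ Ici s = Icc s b := by
      ext t
      simp only [mem_inter_iff, mem_Ioc, mem_Ici, mem_Icc]
      constructor
      · rintro ⟨⟨_, h2⟩, h3⟩; exact ⟨h3, h2⟩
      · rintro ⟨h1, h2⟩; exact ⟨⟨lt_of_lt_of_le hs.1 h1, h2⟩, h1⟩
    rw [hν, h1, setIntegral_indicator measurableSet_Ici, h2, integral_Icc_eq_integral_Ioc,
      ← intervalIntegral.integral_of_le hs.2, intervalIntegral.integral_const_mul, expint]
  calc (∫ t in x..b, Real.exp (-t) * ∫ s in x..t, f s * Real.exp s)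
      = ∫ t in Ioc x b, Real.exp (-t) * ∫ s in x..t, f s * Real.exp s :=
        intervalIntegral.integral_of_le hxb
    _ = ∫ t, (∫ s, H (t, s) ∂ν) ∂ν := by
        rw [hν]
        exact (setIntegral_congr_fun measurableSet_Ioc fun t ht => (inner1 t ht)).symm
    _ = ∫ s, (∫ t, H (t, s) ∂ν) ∂ν := integral_integral_swap hint
    _ = ∫ s in Ioc x b, (f s * Real.exp s) * (Real.exp (-s) - Real.exp (-b)) := by
        rw [hν]
        exact setIntegral_congr_fun measurableSet_Ioc fun s hs => (inner2 s hs)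
    _ = ∫ s in x..b, (f s * Real.exp s) * (Real.exp (-s) - Real.exp (-b)) :=
        (intervalIntegral.integral_of_le hxb).symm

lemma SopIdent (hf : Measurable f) (hbd : ∀ x, |f x| ≤ C) {x b : ℝ} (hxb : x ≤ b) :
    ∫ t in x..b, Sop f t = Sop f x - Sop f b + ∫ t in x..b, f t := by
  set Fx : ℝ := ∫ s in (0:ℝ)..x, f s * Real.exp s with hFx
  have hF : ∀ t : ℝ, (∫ s in (0:ℝ)..t, f s * Real.exp s)
      = Fx + ∫ s in x..t, f s * Real.exp s := fun t =>
    (intervalIntegral.integral_add_adjacent_intervals (myIntExp hf hbd 0 x)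
      (myIntExp hf hbd x t)).symm
  have hSop : ∀ t : ℝ, Sop f t
      = Real.exp (-t) * Fx + Real.exp (-t) * ∫ s in x..t, f s * Real.exp s := by
    intro t; rw [Sop, hF t]; ring
  have hcont2 : Continuous fun t => Real.exp (-t) * ∫ s in x..t, f s * Real.exp s :=
    (Real.continuous_exp.comp continuous_neg).mul
      (intervalIntegral.continuous_primitive (fun a b => myIntExp hf hbd a b) x)
  have step1 : ∫ t in x..b, Sop f t
      = (∫ t in x..b, Real.exp (-t) * Fx)
        + ∫ t in x..b, Real.exp (-t) * ∫ s in x..t, f s * Real.exp s := by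
    have c1 : Continuous fun t : ℝ => Real.exp (-t) * Fx :=
      (Real.continuous_exp.comp continuous_neg).mul continuous_const
    rw [intervalIntegral.integral_congr
      (g := fun t => Real.exp (-t) * Fx + Real.exp (-t) * ∫ s in x..t, f s * Real.exp s)
      (fun t _ => hSop t),
      intervalIntegral.integral_add (c1.intervalIntegrable x b)
        (hcont2.intervalIntegrable x b)]
  have step2 : (∫ t in x..b, Real.exp (-t) * Fx) = Fx * (Real.exp (-x) - Real.exp (-b)) := by
    have : (∫ t in x..b, Real.exp (-t) * Fx) = Fx * ∫ t in x..b, Real.exp (-t) := by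
      rw [← intervalIntegral.integral_const_mul]
      exact intervalIntegral.integral_congr fun t _ => by ring
    rw [this, expint]
  have step3 : (∫ t in x..b, Real.exp (-t) * ∫ s in x..t, f s * Real.exp s)
      = (∫ t in x..b, f t) - Real.exp (-b) * ∫ s in x..b, f s * Real.exp s := by
    rw [fubini_tri hf hbd hxb]
    have hpt : ∀ s : ℝ, (f s * Real.exp s) * (Real.exp (-s) - Real.exp (-b))
        = f s - Real.exp (-b) * (f s * Real.exp s) := by
      intro s
      have h3 : Real.exp s * Real.exp (-s) = 1 := by rw [← Real.exp_add]; simp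
      linear_combination f s * h3
    rw [intervalIntegral.integral_congr (g := fun s => f s - Real.exp (-b) * (f s * Real.exp s))
      (fun s _ => hpt s)]
    rw [intervalIntegral.integral_sub (myInt hf hbd x b)
      ((myIntExp hf hbd x b).const_mul _), intervalIntegral.integral_const_mul]
  have hb : Sop f b = Real.exp (-b) * Fx + Real.exp (-b) * ∫ s in x..b, f s * Real.exp s :=
    hSop b
  have hx' : Sop f x = Real.exp (-x) * Fx := by
    rw [Sop, hFx]
  rw [step1, step2, step3, hb, hx']
  ring

end aux

/-- `M̄₁(f) ≤ R̄(f)` for every bounded measurable `f` on `[0,∞)`. -/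
theorem stmt8 (f : ℝ → ℝ) (C : ℝ) (hf : Measurable f) (hbd : ∀ x, |f x| ≤ C) :
    M1 f ≤ limsup (Sop f) atTop := by
  have hC : 0 ≤ C := le_trans (abs_nonneg _) (hbd 0)
  set R := limsup (Sop f) atTop with hR
  -- uniform bound on averages
  set A : ℝ → ℝ → ℝ := fun θ x => (1/θ) * ∫ t in x..(x+θ), f t with hA
  have hAbd : ∀ θ x, |A θ x| ≤ C := by
    intro θ x
    by_cases hθ : θ = 0
    · simp [hA, hθ, hC]
    · have h1 : ‖∫ t in x..(x+θ), f t‖ ≤ C * |x + θ - x| :=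
        intervalIntegral.norm_integral_le_of_norm_le_const fun t _ => by
          simpa [Real.norm_eq_abs] using hbd t
      rw [hA, abs_mul, abs_div]
      simp only [abs_one, add_sub_cancel_left] at h1 ⊢
      rw [Real.norm_eq_abs] at h1
      rw [div_mul_eq_mul_div, one_mul, div_le_iff₀ (abs_pos.2 hθ)]
      calc |∫ t in x..(x+θ), f t| ≤ C * |θ| := h1
        _ = C * |θ| := rfl
  have hSbd : ∀ᶠ x in atTop, |Sop f x| ≤ C :=
    (eventually_ge_atTop (0:ℝ)).mono fun x hx => SopBound hf hbd x hx
  have hups : IsBoundedUnder (· ≤ ·) atTop (Sop f) :=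
    isBoundedUnder_of_eventually_le (hSbd.mono fun x h => (abs_le.1 h).2)
  -- it suffices to show M1 f ≤ R + ε for all ε > 0
  refine le_of_forall_pos_le_add fun ε hε => ?_
  have hev : ∀ᶠ x in atTop, Sop f x < R + ε / 2 :=
    eventually_lt_of_limsup_lt (by linarith) hups
  rcases eventually_atTop.1 hev with ⟨x₀, hx₀⟩
  -- key bound for each θ > 0
  have key : ∀ θ : ℝ, 0 < θ → limsup (A θ) atTop ≤ R + ε/2 + 2*C/θ := by
    intro θ hθ
    refine limsup_le_of_le
      (isCoboundedUnder_le_of_le atTop fun x => neg_le_of_abs_le (hAbd θ x)) ?_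
    filter_upwards [eventually_ge_atTop (max x₀ 0)] with x hx
    have hx1 : x₀ ≤ x := le_trans (le_max_left _ _) hx
    have hx2 : (0:ℝ) ≤ x := le_trans (le_max_right _ _) hx
    have hxb : x ≤ x + θ := by linarith
    have hid := SopIdent hf hbd (f := f) (x := x) (b := x + θ) hxb
    have hSx : |Sop f x| ≤ C := SopBound hf hbd x hx2
    have hSxb : |Sop f (x+θ)| ≤ C := SopBound hf hbd (x+θ) (by linarith)
    have hmono : (∫ t in x..(x+θ), Sop f t) ≤ (R + ε/2) * θ := by
      calc (∫ t in x..(x+θ), Sop f t) ≤ ∫ t in x..(x+θ), (R + ε/2) := by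
            apply intervalIntegral.integral_mono_on hxb
              ((SopCont hf hbd).intervalIntegrable _ _)
              (intervalIntegrable_const)
            intro t ht
            exact (hx₀ t (le_trans hx1 ht.1)).le
        _ = (R + ε/2) * θ := by
            rw [intervalIntegral.integral_const]; simp [smul_eq_mul]; ring
    have hfθ : (∫ t in x..(x+θ), f t) ≤ 2*C + (R + ε/2) * θ := by
      have := abs_le.1 hSx
      have := abs_le.1 hSxb
      have h1 : (∫ t in x..(x+θ), f t)
          = (∫ t in x..(x+θ), Sop f t) - Sop f x + Sop f (x+θ) := by linarith [hid]
      linarith [hmono]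
    show (1/θ) * ∫ t in x..(x+θ), f t ≤ R + ε/2 + 2*C/θ
    rw [div_mul_eq_mul_div, one_mul, div_le_iff₀ hθ]
    calc (∫ t in x..(x+θ), f t) ≤ 2*C + (R + ε/2) * θ := hfθ
      _ = (R + ε/2 + 2*C/θ) * θ := by field_simp; ring
  -- the outer limsup
  have hg_lb : ∀ θ : ℝ, -C ≤ limsup (A θ) atTop := by
    intro θ
    refine le_limsup_of_frequently_le
      (Frequently.of_forall fun x => neg_le_of_abs_le (hAbd θ x))
      (isBoundedUnder_of_eventually_le
        (Eventually.of_forall fun x => (abs_le.1 (hAbd θ x)).2))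
  have hout : ∀ᶠ θ : ℝ in atTop, limsup (A θ) atTop ≤ R + ε := by
    filter_upwards [eventually_ge_atTop (max 1 (4*C/ε))] with θ hθ
    have hθ1 : (0:ℝ) < θ := lt_of_lt_of_le one_pos (le_trans (le_max_left _ _) hθ)
    have hθ2 : 4*C/ε ≤ θ := le_trans (le_max_right _ _) hθ
    have h2Cθ : 2*C/θ ≤ ε/2 := by
      rw [div_le_iff₀ hθ1]
      rw [div_le_iff₀ hε] at hθ2
      nlinarith
    calc limsup (A θ) atTop ≤ R + ε/2 + 2*C/θ := key θ hθ1
      _ ≤ R + ε := by linarith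
  have hM1 : M1 f = limsup (fun θ : ℝ => limsup (A θ) atTop) atTop := rfl
  rw [hM1]
  exact limsup_le_of_le
    (isCoboundedUnder_le_of_le atTop fun θ => hg_lb θ) hout
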